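/- (Vacancy chains, new applicant) Let I be a Hospitals/Residents instance with strict preferences and let I' be obtained from I by adding one new applicant a together with her strict preference list and her position in each company's strict ranking (all other data unchanged). Let S be the set of matched applicants in a stable matching of I and S' the set of matched applicants in a stable matching of I'. Then exactly one of the following holds: S' = S, or S' = S ∪ {a}, or S' = (S ∪ {a}) \ {b} for some applicant b ∈ S with b ≠ a. -/

import Mathlib

open Finset

variable {A C : Type*} [Fintype A] [DecidableEq A] [Fintype C] [DecidableEq C]

/-- `M` is a matching w.r.t. the acceptable pairs `E` and the upper quotas `u`. -/
def IsMatching (E : Finset (A × C)) (u : C → ℕ) (M : Finset (A × C)) : Prop :=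
  M ⊆ E ∧ (∀ a : A, (M.filter (fun p => p.1 = a)).card ≤ 1) ∧
    ∀ c : C, (M.filter (fun p => p.2 = c)).card ≤ u c

/-- `(a, c) ∈ E \ M` blocks `M`. -/
def Blocks (E : Finset (A × C)) (u : C → ℕ) (pref : A → C → ℕ) (s : A → C → ℤ)
    (M : Finset (A × C)) (a : A) (c : C) : Prop :=
  (a, c) ∈ E ∧ (a, c) ∉ M ∧ (∀ c', (a, c') ∈ M → pref a c < pref a c') ∧
    ((M.filter (fun p => p.2 = c)).card < u c ∨ ∃ h : A, (h, c) ∈ M ∧ s h c < s a c)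

/-- `M` is stable: no pair blocks it. -/
def Stable (E : Finset (A × C)) (u : C → ℕ) (pref : A → C → ℕ) (s : A → C → ℤ)
    (M : Finset (A × C)) : Prop :=
  ∀ (a : A) (c : C), ¬ Blocks E u pref s M a c

set_option linter.unusedSectionVars false

lemma matched_unique {M : Finset (A × C)}
    (h : ∀ x : A, (M.filter (fun p => p.1 = x)).card ≤ 1)
    {x : A} {c c' : C} (h1 : (x, c) ∈ M) (h2 : (x, c') ∈ M) : c = c' := by
  have := Finset.card_le_one.mp (h x) (x, c) (Finset.mem_filter.mpr ⟨h1, rfl⟩)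
    (x, c') (Finset.mem_filter.mpr ⟨h2, rfl⟩)
  exact congrArg Prod.snd this

lemma stable_consequence {E : Finset (A × C)} {u : C → ℕ} {pref : A → C → ℕ}
    {s : A → C → ℤ} {M : Finset (A × C)} {x : A} {c : C}
    (hst : ¬ Blocks E u pref s M x c)
    (h1 : (x, c) ∈ E) (h2 : (x, c) ∉ M)
    (h3 : ∀ c', (x, c') ∈ M → pref x c < pref x c') :
    u c ≤ (M.filter (fun p => p.2 = c)).card ∧ ∀ y, (y, c) ∈ M → s x c ≤ s y c := by
  have hq : ¬ ((M.filter (fun p => p.2 = c)).card < u c ∨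
      ∃ h : A, (h, c) ∈ M ∧ s h c < s x c) := fun q => hst ⟨h1, h2, h3, q⟩
  push_neg at hq
  exact ⟨hq.1, fun y hy => hq.2 y hy⟩

lemma count_core
    (M N : Finset (A × C)) (u : C → ℕ) (D W : Finset A)
    (hM1 : ∀ x : A, (M.filter (fun p => p.1 = x)).card ≤ 1)
    (hN1 : ∀ x : A, (N.filter (fun p => p.1 = x)).card ≤ 1)
    (hMu : ∀ c, (M.filter (fun p => p.2 = c)).card ≤ u c)
    (hD : ∀ x ∈ D, ∃ c, (x, c) ∈ M)
    (hkey : ∀ x ∈ D, ∀ c, (x, c) ∈ M →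
      (x, c) ∉ N ∧ u c ≤ (N.filter (fun p => p.2 = c)).card ∧
        ∀ y, (y, c) ∈ N → (y, c) ∉ M → y ∈ W) :
    D.card ≤ W.card := by
  classical
  set Dc : C → Finset A := fun c => D.filter (fun x => (x, c) ∈ M) with hDcdef
  set Yc : C → Finset A := fun c =>
    if (Dc c).Nonempty then
      ((N.filter (fun p => p.2 = c)) \ (M.filter (fun p => p.2 = c))).image Prod.fst
    else ∅ with hYcdef
  have hYmem : ∀ {y : A} {c : C}, y ∈ Yc c → (Dc c).Nonempty ∧ (y, c) ∈ N ∧ (y, c) ∉ M := by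
    intro y c hy
    simp only [hYcdef] at hy
    split_ifs at hy with h
    · simp only [Finset.mem_image] at hy
      obtain ⟨⟨y', c'⟩, hp, rfl⟩ := hy
      rw [Finset.mem_sdiff, Finset.mem_filter, Finset.mem_filter] at hp
      obtain ⟨⟨hpN, hpc⟩, hpM⟩ := hp
      dsimp only at hpc ⊢
      subst hpc
      exact ⟨h, hpN, fun hm => hpM ⟨hm, rfl⟩⟩
    · exact absurd hy (Finset.notMem_empty _)
  have hDcdisj : ∀ c ∈ (Finset.univ : Finset C), ∀ c' ∈ (Finset.univ : Finset C),
      c ≠ c' → Disjoint (Dc c) (Dc c') := by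
    intro c _ c' _ hcc
    rw [Finset.disjoint_left]
    intro x hx hx'
    simp only [hDcdef, Finset.mem_filter] at hx hx'
    exact hcc (matched_unique hM1 hx.2 hx'.2)
  have hYdisj : ∀ c ∈ (Finset.univ : Finset C), ∀ c' ∈ (Finset.univ : Finset C),
      c ≠ c' → Disjoint (Yc c) (Yc c') := by
    intro c _ c' _ hcc
    rw [Finset.disjoint_left]
    intro y hy hy'
    exact hcc (matched_unique hN1 (hYmem hy).2.1 (hYmem hy').2.1)
  have hDeq : D = Finset.univ.biUnion Dc := by
    ext x
    simp only [Finset.mem_biUnion, Finset.mem_univ, true_and, hDcdef, Finset.mem_filter]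
    constructor
    · intro hx
      obtain ⟨c, hc⟩ := hD x hx
      exact ⟨c, hx, hc⟩
    · rintro ⟨c, hx, -⟩
      exact hx
  have hle : ∀ c, (Dc c).card ≤ (Yc c).card := by
    intro c
    rcases (Dc c).eq_empty_or_nonempty with h | h
    · simp [h]
    · have hYeq : Yc c =
          ((N.filter (fun p => p.2 = c)) \ (M.filter (fun p => p.2 = c))).image Prod.fst := by
        simp only [hYcdef, if_pos h]
      obtain ⟨x0, hx0⟩ := h
      simp only [hDcdef, Finset.mem_filter] at hx0
      have hk := hkey x0 hx0.1 c hx0.2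
      set Ac := M.filter (fun p => p.2 = c) with hAc
      set Bc := N.filter (fun p => p.2 = c) with hBc
      have step1 : (Dc c).card ≤ (Ac \ Bc).card := by
        apply Finset.card_le_card_of_injOn (fun x => (x, c))
        · intro x hx
          simp only [hDcdef, Finset.mem_coe, Finset.mem_filter] at hx
          rw [Finset.mem_coe, Finset.mem_sdiff]
          constructor
          · exact Finset.mem_filter.mpr ⟨hx.2, rfl⟩
          · intro hb
            exact (hkey x hx.1 c hx.2).1 (Finset.mem_filter.mp hb).1
        · intro x _ y _ hxy
          exact congrArg Prod.fst hxy
      have step2 : (Ac \ Bc).card ≤ (Bc \ Ac).card := by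
        have e1 := Finset.card_sdiff_add_card_inter Ac Bc
        have e2 := Finset.card_sdiff_add_card_inter Bc Ac
        have e3 : (Ac ∩ Bc).card = (Bc ∩ Ac).card := by rw [Finset.inter_comm]
        have e4 : Ac.card ≤ u c := hMu c
        have e5 : u c ≤ Bc.card := hk.2.1
        omega
      have step3 : ((Bc \ Ac).image Prod.fst).card = (Bc \ Ac).card := by
        apply Finset.card_image_of_injOn
        intro p hp q hq hpq
        have hpc : p.2 = c := (Finset.mem_filter.mp (Finset.mem_sdiff.mp hp).1).2
        have hqc : q.2 = c := (Finset.mem_filter.mp (Finset.mem_sdiff.mp hq).1).2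
        exact Prod.ext hpq (hpc.trans hqc.symm)
      rw [hYeq]
      omega
  have hWsub : Finset.univ.biUnion Yc ⊆ W := by
    intro y hy
    rw [Finset.mem_biUnion] at hy
    obtain ⟨c, -, hyc⟩ := hy
    obtain ⟨⟨x0, hx0⟩, hyN, hyM⟩ := hYmem hyc
    simp only [hDcdef, Finset.mem_filter] at hx0
    exact (hkey x0 hx0.1 c hx0.2).2.2 y hyN hyM
  calc D.card = ∑ c, (Dc c).card := by rw [hDeq, Finset.card_biUnion hDcdisj]
    _ ≤ ∑ c, (Yc c).card := Finset.sum_le_sum fun c _ => hle c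
    _ = (Finset.univ.biUnion Yc).card := (Finset.card_biUnion hYdisj).symm
    _ ≤ W.card := Finset.card_le_card hWsub

/-- Vacancy chains, new applicant (Theorem 4/iii, first part): let `I'` be an HR
instance with strict preferences, acceptable pairs `E'`, and let `I` be obtained by
deleting the applicant `a` (its acceptable pairs are those of `E'` not involving `a`;
all other data unchanged).  If `S` is the set of matched applicants in a stable matching
`M` of `I` and `S'` the set of matched applicants in a stable matching `M'` of `I'`,
then exactly one of the following holds: `S' = S`, or `S' = S ∪ {a}`, or
`S' = (S ∪ {a}) \ {b}` for some applicant `b ∈ S`, `b ≠ a`. -/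
theorem vacancy_chain_new_applicant
    (E' : Finset (A × C)) (u : C → ℕ) (pref : A → C → ℕ) (s : A → C → ℤ) (a : A)
    (hprefStrict : ∀ x c c', (x, c) ∈ E' → (x, c') ∈ E' → pref x c = pref x c' → c = c')
    (hcompStrict : ∀ c x y, (x, c) ∈ E' → (y, c) ∈ E' → s x c = s y c → x = y)
    (M M' : Finset (A × C))
    (hM : IsMatching (E'.filter (fun p => p.1 ≠ a)) u M)
    (hMstable : Stable (E'.filter (fun p => p.1 ≠ a)) u pref s M)
    (hM' : IsMatching E' u M') (hM'stable : Stable E' u pref s M')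
    (S S' : Finset A)
    (hS : S = M.image Prod.fst) (hS' : S' = M'.image Prod.fst) :
    (S' = S ∧ ¬ (S' = insert a S) ∧
        ¬ ∃ b ∈ S, b ≠ a ∧ S' = insert a (S.erase b)) ∨
    (¬ (S' = S) ∧ S' = insert a S ∧
        ¬ ∃ b ∈ S, b ≠ a ∧ S' = insert a (S.erase b)) ∨
    (¬ (S' = S) ∧ ¬ (S' = insert a S) ∧
        ∃ b ∈ S, b ≠ a ∧ S' = insert a (S.erase b)) := by
  classical
  obtain ⟨hME, hM1, hMu⟩ := hM
  obtain ⟨hM'E, hM'1, hM'u⟩ := hM'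
  have hMa : ∀ {x : A} {c : C}, (x, c) ∈ M → x ≠ a :=
    fun h => (Finset.mem_filter.mp (hME h)).2
  have hME' : ∀ {x : A} {c : C}, (x, c) ∈ M → (x, c) ∈ E' :=
    fun h => (Finset.mem_filter.mp (hME h)).1
  have hSmem : ∀ x, x ∈ S ↔ ∃ c, (x, c) ∈ M := by
    intro x; rw [hS, Finset.mem_image]
    constructor
    · rintro ⟨⟨x', c⟩, hp, rfl⟩; exact ⟨c, hp⟩
    · rintro ⟨c, hc⟩; exact ⟨(x, c), hc, rfl⟩
  have hS'mem : ∀ x, x ∈ S' ↔ ∃ c, (x, c) ∈ M' := by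
    intro x; rw [hS', Finset.mem_image]
    constructor
    · rintro ⟨⟨x', c⟩, hp, rfl⟩; exact ⟨c, hp⟩
    · rintro ⟨c, hc⟩; exact ⟨(x, c), hc, rfl⟩
  have haS : a ∉ S := by
    intro h
    obtain ⟨c, hc⟩ := (hSmem a).mp h
    exact hMa hc rfl
  -- Claim A machinery: applicants (≠ a) strictly preferring M'
  set D2 : Finset A := Finset.univ.filter
    (fun x => x ≠ a ∧ ∃ c, (x, c) ∈ M' ∧ ∀ c', (x, c') ∈ M → pref x c < pref x c') with hD2def
  set W2 : Finset A := Finset.univ.filter (fun y => y ∈ D2 ∧ y ∈ S) with hW2def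
  have hcount2 : D2.card ≤ W2.card := by
    apply count_core M' M u D2 W2 hM'1 hM1 hM'u
    · intro x hx
      simp only [hD2def, Finset.mem_filter, Finset.mem_univ, true_and] at hx
      obtain ⟨-, c, hc, -⟩ := hx
      exact ⟨c, hc⟩
    · intro x hx c hxc
      simp only [hD2def, Finset.mem_filter, Finset.mem_univ, true_and] at hx
      obtain ⟨hxa, c₀, hc₀, hpref₀⟩ := hx
      have hceq : c₀ = c := matched_unique hM'1 hc₀ hxc
      subst hceq
      have hxM : (x, c₀) ∉ M := fun h => lt_irrefl _ (hpref₀ c₀ h)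
      have hxE : (x, c₀) ∈ E'.filter (fun p => p.1 ≠ a) :=
        Finset.mem_filter.mpr ⟨hM'E hxc, hxa⟩
      have hcons := stable_consequence (hMstable x c₀) hxE hxM hpref₀
      refine ⟨hxM, hcons.1, ?_⟩
      intro y hyM hyM'
      have hya : y ≠ a := hMa hyM
      have hxy : x ≠ y := fun h => hyM' (h ▸ hxc)
      have hsxy : s x c₀ < s y c₀ :=
        lt_of_le_of_ne (hcons.2 y hyM)
          (fun h => hxy (hcompStrict c₀ x y (hM'E hxc) (hME' hyM) h))
      have hP3 : ¬ ∀ c', (y, c') ∈ M' → pref y c₀ < pref y c' := by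
        intro hP3
        have := (stable_consequence (hM'stable y c₀) (hME' hyM) hyM' hP3).2 x hxc
        exact absurd hsxy (not_lt.mpr this)
      push_neg at hP3
      obtain ⟨c'', hc''M', hple⟩ := hP3
      have hne : c'' ≠ c₀ := fun h => hyM' (h ▸ hc''M')
      have hplt : pref y c'' < pref y c₀ :=
        lt_of_le_of_ne hple (fun h => hne (hprefStrict y c'' c₀ (hM'E hc''M') (hME' hyM) h))
      simp only [hW2def, Finset.mem_filter, Finset.mem_univ, true_and]
      refine ⟨?_, (hSmem y).mpr ⟨c₀, hyM⟩⟩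
      simp only [hD2def, Finset.mem_filter, Finset.mem_univ, true_and]
      exact ⟨hya, c'', hc''M', fun c' hc' => by
        rw [matched_unique hM1 hc' hyM]; exact hplt⟩
  have hW2sub : W2 ⊆ D2 := by
    intro y hy
    simp only [hW2def, Finset.mem_filter, Finset.mem_univ, true_and] at hy
    exact hy.1
  have hW2eq : W2 = D2 := Finset.eq_of_subset_of_card_le hW2sub hcount2
  have hD2S : ∀ x ∈ D2, x ∈ S := by
    intro x hx
    rw [← hW2eq] at hx
    simp only [hW2def, Finset.mem_filter, Finset.mem_univ, true_and] at hx
    exact hx.2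
  have hA : ∀ x, x ∈ S' → x ≠ a → x ∈ S := by
    intro x hx hxa
    by_cases hxS : x ∈ S
    · exact hxS
    · apply hD2S x
      simp only [hD2def, Finset.mem_filter, Finset.mem_univ, true_and]
      obtain ⟨c, hc⟩ := (hS'mem x).mp hx
      exact ⟨hxa, c, hc, fun c' hc' => absurd ((hSmem x).mpr ⟨c', hc'⟩) hxS⟩
  -- Claim B machinery: applicants strictly preferring M
  set D1 : Finset A := Finset.univ.filter
    (fun x => ∃ c, (x, c) ∈ M ∧ ∀ c', (x, c') ∈ M' → pref x c < pref x c') with hD1def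
  set W1 : Finset A := Finset.univ.filter
    (fun y => (∃ c, (y, c) ∈ M') ∧ (y ∈ D1 ∨ y = a)) with hW1def
  have hcount1 : D1.card ≤ W1.card := by
    apply count_core M M' u D1 W1 hM1 hM'1 hMu
    · intro x hx
      simp only [hD1def, Finset.mem_filter, Finset.mem_univ, true_and] at hx
      obtain ⟨c, hc, -⟩ := hx
      exact ⟨c, hc⟩
    · intro x hx c hxc
      simp only [hD1def, Finset.mem_filter, Finset.mem_univ, true_and] at hx
      obtain ⟨c₀, hc₀, hpref₀⟩ := hx
      have hceq : c₀ = c := matched_unique hM1 hc₀ hxc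
      subst hceq
      have hxN : (x, c₀) ∉ M' := fun h => lt_irrefl _ (hpref₀ c₀ h)
      have hcons := stable_consequence (hM'stable x c₀) (hME' hxc) hxN hpref₀
      refine ⟨hxN, hcons.1, ?_⟩
      intro y hyN hyM
      simp only [hW1def, Finset.mem_filter, Finset.mem_univ, true_and]
      refine ⟨⟨c₀, hyN⟩, ?_⟩
      by_cases hya : y = a
      · exact Or.inr hya
      · left
        have hyE' : (y, c₀) ∈ E' := hM'E hyN
        have hyE : (y, c₀) ∈ E'.filter (fun p => p.1 ≠ a) :=
          Finset.mem_filter.mpr ⟨hyE', hya⟩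
        have hxy : x ≠ y := fun h => hyM (h ▸ hxc)
        have hsxy : s x c₀ < s y c₀ :=
          lt_of_le_of_ne (hcons.2 y hyN)
            (fun h => hxy (hcompStrict c₀ x y (hME' hxc) hyE' h))
        have hP3 : ¬ ∀ c', (y, c') ∈ M → pref y c₀ < pref y c' := by
          intro hP3
          have := (stable_consequence (hMstable y c₀) hyE hyM hP3).2 x hxc
          exact absurd hsxy (not_lt.mpr this)
        push_neg at hP3
        obtain ⟨c'', hc''M, hple⟩ := hP3
        have hne : c'' ≠ c₀ := fun h => hyM (h ▸ hc''M)
        have hplt : pref y c'' < pref y c₀ :=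
          lt_of_le_of_ne hple (fun h => hne (hprefStrict y c'' c₀ (hME' hc''M) hyE' h))
        simp only [hD1def, Finset.mem_filter, Finset.mem_univ, true_and]
        exact ⟨c'', hc''M, fun c' hc' => by
          rw [matched_unique hM'1 hc' hyN]; exact hplt⟩
  have hcards : (D1.filter (fun y => y ∈ S')).card
      + (D1.filter (fun y => ¬ y ∈ S')).card = D1.card :=
    Finset.card_filter_add_card_filter_not (fun y => y ∈ S')
  have hSsub : ∀ x ∈ S, x ∉ S' → x ∈ D1.filter (fun y => ¬ y ∈ S') := by
    intro x hx hx'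
    refine Finset.mem_filter.mpr ⟨?_, hx'⟩
    simp only [hD1def, Finset.mem_filter, Finset.mem_univ, true_and]
    obtain ⟨c, hc⟩ := (hSmem x).mp hx
    exact ⟨c, hc, fun c' hc' => absurd ((hS'mem x).mpr ⟨c', hc'⟩) hx'⟩
  by_cases haS' : a ∈ S'
  · -- a is matched in M'
    have hW1sub : W1 ⊆ insert a (D1.filter (fun y => y ∈ S')) := by
      intro y hy
      simp only [hW1def, Finset.mem_filter, Finset.mem_univ, true_and] at hy
      obtain ⟨⟨c, hc⟩, hy2⟩ := hy
      rcases hy2 with hyD | rfl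
      · exact Finset.mem_insert_of_mem
          (Finset.mem_filter.mpr ⟨hyD, (hS'mem y).mpr ⟨c, hc⟩⟩)
      · exact Finset.mem_insert_self _ _
    have hQ1 : (D1.filter (fun y => ¬ y ∈ S')).card ≤ 1 := by
      have h2 : W1.card ≤ (D1.filter (fun y => y ∈ S')).card + 1 :=
        le_trans (Finset.card_le_card hW1sub) (Finset.card_insert_le _ _)
      omega
    by_cases hSS : ∀ x ∈ S, x ∈ S'
    · -- branch 2 : S' = insert a S
      have hS'eq : S' = insert a S := by
        ext x
        simp only [Finset.mem_insert]
        constructor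
        · intro hx
          by_cases hxa : x = a
          · exact Or.inl hxa
          · exact Or.inr (hA x hx hxa)
        · rintro (rfl | hx)
          · exact haS'
          · exact hSS x hx
      refine Or.inr (Or.inl ⟨?_, hS'eq, ?_⟩)
      · intro h
        rw [h] at haS'
        exact haS haS'
      · rintro ⟨b, hbS, hba, hb⟩
        have hbS' : b ∈ S' := hSS b hbS
        rw [hb] at hbS'
        rcases Finset.mem_insert.mp hbS' with h | h
        · exact hba h
        · exact (Finset.mem_erase.mp h).1 rfl
    · -- branch 3 : some b leaves
      push_neg at hSS
      obtain ⟨b, hbS, hbS'⟩ := hSS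
      have hbQ : b ∈ D1.filter (fun y => ¬ y ∈ S') := hSsub b hbS hbS'
      have hSin : ∀ x ∈ S, x ≠ b → x ∈ S' := by
        intro x hx hxb
        by_contra hx'
        exact hxb (Finset.card_le_one.mp hQ1 x (hSsub x hx hx') b hbQ)
      have hba : b ≠ a := by
        rintro rfl
        exact haS hbS
      have hS'eq : S' = insert a (S.erase b) := by
        ext x
        simp only [Finset.mem_insert, Finset.mem_erase]
        constructor
        · intro hx
          by_cases hxa : x = a
          · exact Or.inl hxa
          · refine Or.inr ⟨?_, hA x hx hxa⟩
            rintro rfl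
            exact hbS' hx
        · rintro (rfl | ⟨hxb, hxS⟩)
          · exact haS'
          · exact hSin x hxS hxb
      refine Or.inr (Or.inr ⟨?_, ?_, b, hbS, hba, hS'eq⟩)
      · rintro rfl
        exact hbS' hbS
      · intro h
        rw [h] at hbS'
        exact hbS' (Finset.mem_insert_of_mem hbS)
  · -- a unmatched in M' : S' = S
    have hW1sub' : W1 ⊆ D1.filter (fun y => y ∈ S') := by
      intro y hy
      simp only [hW1def, Finset.mem_filter, Finset.mem_univ, true_and] at hy
      obtain ⟨⟨c, hc⟩, hy2⟩ := hy
      have hyS' : y ∈ S' := (hS'mem y).mpr ⟨c, hc⟩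
      rcases hy2 with hyD | rfl
      · exact Finset.mem_filter.mpr ⟨hyD, hyS'⟩
      · exact absurd hyS' haS'
    have hQ0 : ∀ x ∈ S, x ∈ S' := by
      intro x hx
      by_contra hx'
      have hmem := hSsub x hx hx'
      have hle := Finset.card_le_card hW1sub'
      have hcard0 : (D1.filter (fun y => ¬ y ∈ S')).card = 0 := by omega
      rw [Finset.card_eq_zero] at hcard0
      rw [hcard0] at hmem
      exact Finset.notMem_empty x hmem
    have hS'S : S' = S := by
      apply Finset.Subset.antisymm
      · intro x hx
        refine hA x hx ?_
        rintro rfl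
        exact haS' hx
      · intro x hx
        exact hQ0 x hx
    refine Or.inl ⟨hS'S, ?_, ?_⟩
    · intro h
      rw [h] at haS'
      exact haS' (Finset.mem_insert_self a S)
    · rintro ⟨b, hbS, hba, hb⟩
      rw [hb] at haS'
      exact haS' (Finset.mem_insert_self a _)
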